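/- For binary potential outcomes satisfying 0 ≤ N₀₁ ≤ N·p₀·(1−p₁), the variance of τ̂(T) = n₁₁(T)/N₁ − n₀₁(T)/N₀ is bounded as (N/(N−1))·{ (N₀/N)·p₁(1−p₁)/N₁ + (N₁/N)·p₀(1−p₀)/N₀ } ≤ var(τ̂) ≤ (N/(N−1))·{ p₁(1−p₁)/N₁ + p₀(1−p₀)/N₀ − τ(1−τ)/N }, where the variance is over the uniform distribution on subsets T of size N₁. -/

import Mathlib

/-- Expectation of a real-valued statistic `f` of the treatment group `T`,
where `T` is a uniformly random subset of `{1,…,N}` of size `N₁`. -/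
noncomputable def expE (N N₁ : ℕ) (f : Finset (Fin N) → ℝ) : ℝ :=
  (∑ T ∈ Finset.powersetCard N₁ (Finset.univ : Finset (Fin N)), f T) /
    ((Finset.powersetCard N₁ (Finset.univ : Finset (Fin N))).card : ℝ)

/-- Variance of a real-valued statistic `f` over uniformly random subsets of size `N₁`. -/
noncomputable def varE (N N₁ : ℕ) (f : Finset (Fin N) → ℝ) : ℝ :=
  expE N N₁ (fun T => (f T - expE N N₁ f) ^ 2)

open Finset


lemma count_subset {α : Type*} [DecidableEq α] (u s : Finset α) (n : ℕ) (hs : s ⊆ u) (hn : s.card ≤ n) :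
    ((powersetCard n u).filter (fun T => s ⊆ T)).card
      = (u.card - s.card).choose (n - s.card) := by
  rw [← card_sdiff_of_subset hs, ← card_powersetCard]
  apply Finset.card_bij' (fun T _ => T \ s) (fun U _ => U ∪ s)
  · intro T hT
    simp only [mem_filter, mem_powersetCard] at hT
    simp only [mem_powersetCard]
    refine ⟨sdiff_subset_sdiff hT.1.1 le_rfl, ?_⟩
    rw [card_sdiff_of_subset hT.2, hT.1.2]
  · intro U hU
    simp only [mem_powersetCard] at hU
    simp only [mem_filter, mem_powersetCard]
    have hdisj : Disjoint U s := disjoint_of_subset_left hU.1 sdiff_disjoint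
    refine ⟨⟨union_subset (hU.1.trans (sdiff_subset)) hs, ?_⟩, subset_union_right⟩
    rw [card_union_of_disjoint hdisj, hU.2]
    omega
  · intro T hT
    simp only [mem_filter] at hT
    rw [sdiff_union_of_subset hT.2]
  · intro U hU
    simp only [mem_powersetCard] at hU
    have hdisj : Disjoint U s := disjoint_of_subset_left hU.1 sdiff_disjoint
    rw [union_sdiff_right, sdiff_eq_self_of_disjoint hdisj]

lemma count_one (N n : ℕ) (hn : n ≤ N) (i : Fin N) :
    ((((powersetCard n (univ : Finset (Fin N))).filter (fun T => i ∈ T)).card : ℝ)) * N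
      = (N.choose n : ℝ) * n := by
  rcases Nat.eq_zero_or_pos n with rfl | hpos
  · have he : ((powersetCard 0 (univ : Finset (Fin N))).filter (fun T => i ∈ T)) = ∅ := by
      ext T
      simp only [mem_filter, mem_powersetCard, Finset.notMem_empty, iff_false]
      rintro ⟨⟨-, hc⟩, hi⟩
      rw [card_eq_zero] at hc
      subst hc; exact absurd hi (Finset.notMem_empty i)
    rw [he]; simp
  · obtain ⟨k, rfl⟩ : ∃ k, n = k + 1 := ⟨n - 1, by omega⟩
    obtain ⟨m, rfl⟩ : ∃ m, N = m + 1 := ⟨N - 1, by omega⟩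
    have hcount : ((powersetCard (k+1) (univ : Finset (Fin (m+1)))).filter
        (fun T => i ∈ T)).card = m.choose k := by
      have : ∀ T : Finset (Fin (m+1)), (i ∈ T) = ({i} ⊆ T) := by
        intro T; simp [singleton_subset_iff]
      simp only [this]
      rw [count_subset _ _ _ (subset_univ _) (by simp)]
      simp
    rw [hcount]
    have h : ((m:ℝ)+1) * m.choose k = ((m+1).choose (k+1) : ℝ) * ((k:ℝ)+1) := by
      have := Nat.add_one_mul_choose_eq m k
      exact_mod_cast this
    push_cast
    linarith [h]

lemma count_two (N n : ℕ) (hn : n ≤ N) (i j : Fin N) (hij : i ≠ j) :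
    ((((powersetCard n (univ : Finset (Fin N))).filter (fun T => i ∈ T ∧ j ∈ T)).card : ℝ))
        * (N * (N - 1))
      = (N.choose n : ℝ) * (n * (n - 1)) := by
  rcases Nat.lt_or_ge n 2 with hlt | hge
  · have he : ((powersetCard n (univ : Finset (Fin N))).filter (fun T => i ∈ T ∧ j ∈ T)) = ∅ := by
      ext T
      simp only [mem_filter, mem_powersetCard, Finset.notMem_empty, iff_false]
      rintro ⟨⟨-, hc⟩, hi, hj⟩
      have : ({i, j} : Finset (Fin N)) ⊆ T := by
        intro x hx; simp at hx; rcases hx with rfl | rfl <;> assumption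
      have h2 : ({i, j} : Finset (Fin N)).card = 2 := card_pair hij
      have := card_le_card this
      omega
    rw [he]
    interval_cases n <;> simp
  · obtain ⟨k, rfl⟩ : ∃ k, n = k + 2 := ⟨n - 2, by omega⟩
    have hN2 : 2 ≤ N := le_trans hge hn
    obtain ⟨m, rfl⟩ : ∃ m, N = m + 2 := ⟨N - 2, by omega⟩
    have hcount : ((powersetCard (k+2) (univ : Finset (Fin (m+2)))).filter
        (fun T => i ∈ T ∧ j ∈ T)).card = m.choose k := by
      have : ∀ T : Finset (Fin (m+2)), (i ∈ T ∧ j ∈ T) = (({i, j} : Finset (Fin (m+2))) ⊆ T) := by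
        intro T
        simp only [insert_subset_iff, singleton_subset_iff, eq_iff_iff]
      simp only [this]
      rw [count_subset _ _ _ (subset_univ _) (by rw [card_pair hij]; omega)]
      rw [card_pair hij]
      simp
    rw [hcount]
    have h1 : ((m:ℝ)+1) * m.choose k = ((m+1).choose (k+1) : ℝ) * ((k:ℝ)+1) := by
      have := Nat.add_one_mul_choose_eq m k
      exact_mod_cast this
    have h2 : ((m:ℝ)+2) * (m+1).choose (k+1) = ((m+2).choose (k+2) : ℝ) * ((k:ℝ)+2) := by
      have := Nat.add_one_mul_choose_eq (m+1) (k+1)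
      exact_mod_cast this
    push_cast
    linear_combination ((m:ℝ)+2) * h1 + ((k:ℝ)+1) * h2

lemma sum_first (N n : ℕ) (hn : n ≤ N) (c : Fin N → ℝ)
    (hcount : ∀ i : Fin N,
      ((((powersetCard n (univ : Finset (Fin N))).filter (fun T => i ∈ T)).card : ℝ)) * N
        = (N.choose n : ℝ) * n) :
    (∑ T ∈ powersetCard n (univ : Finset (Fin N)), ∑ i ∈ T, c i) * N
      = (N.choose n : ℝ) * n * ∑ i, c i := by
  set P := powersetCard n (univ : Finset (Fin N)) with hP
  have step1 : ∑ T ∈ P, ∑ i ∈ T, c i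
      = ∑ i, ((P.filter (fun T => i ∈ T)).card : ℝ) * c i := by
    have h1 : ∀ T ∈ P, ∑ i ∈ T, c i = ∑ i, if i ∈ T then c i else 0 := by
      intro T _
      rw [Finset.sum_ite_mem, univ_inter]
    rw [Finset.sum_congr rfl h1, Finset.sum_comm]
    refine Finset.sum_congr rfl fun i _ => ?_
    rw [Finset.sum_ite, Finset.sum_const_zero, add_zero, Finset.sum_const, nsmul_eq_mul]
  rw [step1, Finset.sum_mul, Finset.mul_sum]
  refine Finset.sum_congr rfl fun i _ => ?_
  have h := hcount i
  linear_combination (c i) * h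

lemma sum_second (N n : ℕ) (hn : n ≤ N) (c : Fin N → ℝ)
    (hcount1 : ∀ i : Fin N,
      ((((powersetCard n (univ : Finset (Fin N))).filter (fun T => i ∈ T)).card : ℝ)) * N
        = (N.choose n : ℝ) * n)
    (hcount2 : ∀ i j : Fin N, i ≠ j →
      ((((powersetCard n (univ : Finset (Fin N))).filter (fun T => i ∈ T ∧ j ∈ T)).card : ℝ))
          * (N * ((N:ℝ) - 1))
        = (N.choose n : ℝ) * (n * ((n:ℝ) - 1))) :
    (∑ T ∈ powersetCard n (univ : Finset (Fin N)), (∑ i ∈ T, c i)^2) * (N * ((N:ℝ) - 1))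
      = (N.choose n : ℝ) * ((n * ((N:ℝ) - 1) - n * ((n:ℝ) - 1)) * (∑ i, (c i)^2)
          + (n * ((n:ℝ) - 1)) * (∑ i, c i)^2) := by
  set P := powersetCard n (univ : Finset (Fin N)) with hP
  -- expand square as a double sum with indicators
  have step1 : ∑ T ∈ P, (∑ i ∈ T, c i)^2
      = ∑ i, ∑ j, ((P.filter (fun T => i ∈ T ∧ j ∈ T)).card : ℝ) * (c i * c j) := by
    have h1 : ∀ T ∈ P, (∑ i ∈ T, c i)^2
        = ∑ i, ∑ j, (if i ∈ T ∧ j ∈ T then c i * c j else 0) := by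
      intro T _
      have e : ∑ i ∈ T, c i = ∑ i, if i ∈ T then c i else 0 := by
        rw [Finset.sum_ite_mem, univ_inter]
      rw [e, sq, Finset.sum_mul_sum]
      refine Finset.sum_congr rfl fun i _ => Finset.sum_congr rfl fun j _ => ?_
      split_ifs with h1 h2 h3 h2 h3 <;> simp_all <;> ring
    rw [Finset.sum_congr rfl h1, Finset.sum_comm]
    refine Finset.sum_congr rfl fun i _ => ?_
    rw [Finset.sum_comm]
    refine Finset.sum_congr rfl fun j _ => ?_
    rw [Finset.sum_ite, Finset.sum_const_zero, add_zero, Finset.sum_const, nsmul_eq_mul]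
  rw [step1]
  -- split diagonal and off-diagonal
  have step2 : ∀ i : Fin N,
      (∑ j, ((P.filter (fun T => i ∈ T ∧ j ∈ T)).card : ℝ) * (c i * c j))
      = ((P.filter (fun T => i ∈ T)).card : ℝ) * (c i * c i)
        + ∑ j ∈ univ.erase i, ((P.filter (fun T => i ∈ T ∧ j ∈ T)).card : ℝ) * (c i * c j) := by
    intro i
    rw [← Finset.add_sum_erase _ _ (mem_univ i)]
    congr 2
    simp
  rw [Finset.sum_congr rfl (fun i _ => step2 i), Finset.sum_add_distrib, add_mul]
  have diag : (∑ i, ((P.filter (fun T => i ∈ T)).card : ℝ) * (c i * c i)) * (N * ((N:ℝ)-1))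
      = (N.choose n : ℝ) * (n * ((N:ℝ)-1)) * ∑ i, (c i)^2 := by
    rw [Finset.sum_mul, Finset.mul_sum]
    refine Finset.sum_congr rfl fun i _ => ?_
    have h := hcount1 i
    linear_combination (((N:ℝ)-1) * (c i * c i)) * h
  have offd : (∑ i, ∑ j ∈ univ.erase i,
        ((P.filter (fun T => i ∈ T ∧ j ∈ T)).card : ℝ) * (c i * c j)) * (N * ((N:ℝ)-1))
      = (N.choose n : ℝ) * (n * ((n:ℝ)-1)) * ((∑ i, c i)^2 - ∑ i, (c i)^2) := by
    have key : ∀ i : Fin N, (∑ j ∈ univ.erase i,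
          ((P.filter (fun T => i ∈ T ∧ j ∈ T)).card : ℝ) * (c i * c j)) * (N * ((N:ℝ)-1))
        = (N.choose n : ℝ) * (n * ((n:ℝ)-1)) * (c i * ((∑ k, c k) - c i)) := by
      intro i
      rw [Finset.sum_mul]
      have : ∀ j ∈ univ.erase i,
          ((P.filter (fun T => i ∈ T ∧ j ∈ T)).card : ℝ) * (c i * c j) * (N * ((N:ℝ)-1))
          = (N.choose n : ℝ) * (n * ((n:ℝ)-1)) * (c i * c j) := by
        intro j hj
        have hij : i ≠ j := (Finset.ne_of_mem_erase hj).symm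
        rw [mul_right_comm, hcount2 i j hij]
      rw [Finset.sum_congr rfl this, ← Finset.mul_sum]
      congr 1
      rw [← Finset.mul_sum, Finset.sum_erase_eq_sub (mem_univ i)]
    rw [Finset.sum_mul, Finset.sum_congr rfl (fun i _ => key i), ← Finset.mul_sum]
    congr 1
    have : ∀ i : Fin N, c i * ((∑ k, c k) - c i) = c i * (∑ k, c k) - (c i)^2 := fun i => by ring
    rw [Finset.sum_congr rfl (fun i _ => this i), Finset.sum_sub_distrib, ← Finset.sum_mul, sq]
  rw [diag, offd]
  ring
lemma card_P (N n : ℕ) : ((powersetCard n (univ : Finset (Fin N))).card : ℝ) = (N.choose n : ℝ) := by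
  rw [card_powersetCard, card_univ, Fintype.card_fin]

lemma card_P_pos (N n : ℕ) (hn : n ≤ N) :
    (0:ℝ) < ((powersetCard n (univ : Finset (Fin N))).card : ℝ) := by
  rw [card_P]
  exact_mod_cast Nat.choose_pos hn

lemma varE_eq (N n : ℕ) (hn : n ≤ N) (f : Finset (Fin N) → ℝ) :
    varE N n f = expE N n (fun T => f T ^ 2) - (expE N n f)^2 := by
  have hcard := card_P_pos N n hn
  set P := powersetCard n (univ : Finset (Fin N)) with hPdef
  set m := expE N n f with hm
  have hsum : ∑ T ∈ P, f T = (P.card : ℝ) * m := by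
    rw [hm]; unfold expE
    rw [mul_div_cancel₀]
    exact ne_of_gt hcard
  unfold varE expE
  rw [← hPdef, hsum, mul_div_cancel_left₀ _ (ne_of_gt hcard)]
  have e : ∑ T ∈ P, (f T - m)^2 = ∑ T ∈ P, ((f T)^2 - 2*m*(f T) + m^2) :=
    Finset.sum_congr rfl fun T _ => by ring
  rw [e, Finset.sum_add_distrib, Finset.sum_sub_distrib, Finset.sum_const, nsmul_eq_mul,
    ← Finset.mul_sum, hsum]
  field_simp
  ring

lemma expE_shift (N n : ℕ) (hn : n ≤ N) (f : Finset (Fin N) → ℝ) (K : ℝ) :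
    expE N n (fun T => f T - K) = expE N n f - K := by
  have hcard := card_P_pos N n hn
  unfold expE
  rw [Finset.sum_sub_distrib, Finset.sum_const, nsmul_eq_mul, sub_div]
  congr 1
  exact mul_div_cancel_left₀ K (ne_of_gt hcard)

lemma varE_shift (N n : ℕ) (hn : n ≤ N) (f : Finset (Fin N) → ℝ) (K : ℝ) :
    varE N n (fun T => f T - K) = varE N n f := by
  unfold varE
  rw [expE_shift N n hn f K]
  congr 1
  funext T
  ring

lemma var_sum (N n : ℕ) (hN : 2 ≤ N) (hn : n ≤ N) (c : Fin N → ℝ) :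
    varE N n (fun T => ∑ i ∈ T, c i) * ((N:ℝ)^2 * ((N:ℝ) - 1))
      = (n:ℝ) * ((N:ℝ) - n) * ((N:ℝ) * (∑ i, (c i)^2) - (∑ i, c i)^2) := by
  have hNr : (2:ℝ) ≤ (N:ℝ) := by exact_mod_cast hN
  have hN0 : (N:ℝ) ≠ 0 := by linarith
  have hN1 : (N:ℝ) - 1 ≠ 0 := by linarith
  have hC0 : (N.choose n : ℝ) ≠ 0 := by
    exact_mod_cast (Nat.choose_pos hn).ne'
  have hA := sum_first N n hn c (count_one N n hn)
  have hB := sum_second N n hn c (count_one N n hn) (fun i j hij => count_two N n hn i j hij)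
  rw [varE_eq N n hn]
  unfold expE
  rw [card_P]
  set S1 := ∑ i, c i with hS1
  set S2 := ∑ i, (c i)^2 with hS2
  set A := ∑ T ∈ powersetCard n (univ : Finset (Fin N)), ∑ i ∈ T, c i with hAdef
  set B := ∑ T ∈ powersetCard n (univ : Finset (Fin N)), (∑ i ∈ T, c i)^2 with hBdef
  have hA' : A = (N.choose n : ℝ) * n * S1 / N := by
    rw [eq_div_iff hN0]; exact hA
  have hB' : B = (N.choose n : ℝ) * (((n:ℝ) * ((N:ℝ) - 1) - (n:ℝ) * ((n:ℝ) - 1)) * S2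
      + ((n:ℝ) * ((n:ℝ) - 1)) * S1^2) / ((N:ℝ) * ((N:ℝ) - 1)) := by
    rw [eq_div_iff (mul_ne_zero hN0 hN1)]; exact hB
  rw [hA', hB']
  field_simp
  ring

lemma lower_id (x11 x10 x01 x00 n1 n0 Nr : ℝ) (hn1 : n1 ≠ 0) (hn0 : n0 ≠ 0)
    (hN : Nr = n1 + n0) (hx : Nr = x11 + x10 + x01 + x00)
    (hN1 : Nr - 1 ≠ 0) (hN0 : Nr ≠ 0) :
    Nr / (Nr - 1) * (n0 / Nr * ((x11 + x10) / Nr) * (1 - (x11 + x10) / Nr) / n1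
        + n1 / Nr * ((x11 + x01) / Nr) * (1 - (x11 + x01) / Nr) / n0) * (Nr ^ 2 * (Nr - 1))
      = n1 * (Nr - n1) * (Nr * ((x11 + x10) / n1 ^ 2 + 2 * x11 / (n1 * n0)
            + (x11 + x01) / n0 ^ 2)
          - ((x11 + x10) / n1 + (x11 + x01) / n0) ^ 2)
        - 2 * (x11 * x00 - x10 * x01) := by
  have hx00 : x00 = n1 + n0 - x11 - x10 - x01 := by rw [hN] at hx; linarith
  subst hN hx00
  field_simp
  ring

lemma upper_id (x11 x10 x01 x00 n1 n0 Nr : ℝ) (hn1 : n1 ≠ 0) (hn0 : n0 ≠ 0)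
    (hN : Nr = n1 + n0) (hx : Nr = x11 + x10 + x01 + x00)
    (hN1 : Nr - 1 ≠ 0) (hN0 : Nr ≠ 0) :
    Nr / (Nr - 1) * ((x11 + x10) / Nr * (1 - (x11 + x10) / Nr) / n1
        + (x11 + x01) / Nr * (1 - (x11 + x01) / Nr) / n0
        - (x10 - x01) / Nr * (1 - (x10 - x01) / Nr) / Nr) * (Nr ^ 2 * (Nr - 1))
      = n1 * (Nr - n1) * (Nr * ((x11 + x10) / n1 ^ 2 + 2 * x11 / (n1 * n0)
            + (x11 + x01) / n0 ^ 2)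
          - ((x11 + x10) / n1 + (x11 + x01) / n0) ^ 2)
        + 2 * x01 * Nr := by
  have hx00 : x00 = n1 + n0 - x11 - x10 - x01 := by rw [hN] at hx; linarith
  subst hN hx00
  field_simp
  ring

/-- If `0 ≤ N₀₁ ≤ N p₀ (1 − p₁)`, then the variance of
`τ̂(T) = n₁₁(T)/N₁ − n₀₁(T)/N₀` is bounded below by
`(N/(N−1)) { (N₀/N) p₁(1−p₁)/N₁ + (N₁/N) p₀(1−p₀)/N₀ }` and above by
`(N/(N−1)) { p₁(1−p₁)/N₁ + p₀(1−p₀)/N₀ − τ(1−τ)/N }`. -/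
theorem stmt_11 (N N₁ N₀ : ℕ) (hN : 2 ≤ N) (hN₁ : 1 ≤ N₁) (hN₁' : N₁ ≤ N - 1)
    (hN₀ : N₀ = N - N₁)
    (Y1 Y0 : Fin N → ℕ) (hY1 : ∀ i, Y1 i ≤ 1) (hY0 : ∀ i, Y0 i ≤ 1)
    (N11 N10 N01 N00 : ℕ)
    (hN11 : N11 = (Finset.univ.filter (fun i => Y1 i = 1 ∧ Y0 i = 1)).card)
    (hN10 : N10 = (Finset.univ.filter (fun i => Y1 i = 1 ∧ Y0 i = 0)).card)
    (hN01 : N01 = (Finset.univ.filter (fun i => Y1 i = 0 ∧ Y0 i = 1)).card)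
    (hN00 : N00 = (Finset.univ.filter (fun i => Y1 i = 0 ∧ Y0 i = 0)).card)
    (p1 p0 τ : ℝ) (hp1 : p1 = ((N11 : ℝ) + N10) / N) (hp0 : p0 = ((N11 : ℝ) + N01) / N)
    (hτ : τ = ((N10 : ℝ) - N01) / N)
    (hN01bound : (N01 : ℝ) ≤ N * p0 * (1 - p1))
    (n11 n01 : Finset (Fin N) → ℕ)
    (hn11 : ∀ T, n11 T = (T.filter (fun i => Y1 i = 1)).card)
    (hn01 : ∀ T, n01 T = (Tᶜ.filter (fun i => Y0 i = 1)).card) :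
    (N : ℝ) / (N - 1) *
        (((N₀ : ℝ) / N) * p1 * (1 - p1) / N₁ + ((N₁ : ℝ) / N) * p0 * (1 - p0) / N₀)
      ≤ varE N N₁ (fun T => (n11 T : ℝ) / N₁ - (n01 T : ℝ) / N₀) ∧
    varE N N₁ (fun T => (n11 T : ℝ) / N₁ - (n01 T : ℝ) / N₀)
      ≤ (N : ℝ) / (N - 1) *
          (p1 * (1 - p1) / N₁ + p0 * (1 - p0) / N₀ - τ * (1 - τ) / N) := by

  have hN₁N : N₁ ≤ N := by omega
  have hNsum : N = N₁ + N₀ := by omega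
  have hn1 : (1:ℝ) ≤ (N₁:ℝ) := by exact_mod_cast hN₁
  have hn0 : (1:ℝ) ≤ (N₀:ℝ) := by exact_mod_cast (by omega : 1 ≤ N₀)
  have hn1p : (0:ℝ) < (N₁:ℝ) := by linarith
  have hn0p : (0:ℝ) < (N₀:ℝ) := by linarith
  have hNr : (N:ℝ) = (N₁:ℝ) + (N₀:ℝ) := by exact_mod_cast hNsum
  have hNp : (0:ℝ) < (N:ℝ) := by linarith
  have hN2r : (2:ℝ) ≤ (N:ℝ) := by exact_mod_cast hN
  have hN1p : (0:ℝ) < (N:ℝ) - 1 := by linarith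
  -- binary counting facts
  have hbin : ∀ (g : Fin N → ℕ), (∀ i, g i ≤ 1) → ∀ (s : Finset (Fin N)),
      ((s.filter (fun i => g i = 1)).card : ℝ) = ∑ i ∈ s, (g i : ℝ) := by
    intro g hg s
    rw [Finset.card_filter]
    push_cast
    refine Finset.sum_congr rfl fun i _ => ?_
    have := hg i
    interval_cases h : g i <;> simp
  have hSa : ∑ i, (Y1 i : ℝ) = (N11:ℝ) + N10 := by
    rw [hN11, hN10, Finset.card_filter, Finset.card_filter]
    push_cast
    rw [← Finset.sum_add_distrib]
    refine Finset.sum_congr rfl fun i _ => ?_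
    have h1 := hY1 i; have h0 := hY0 i
    interval_cases hh1 : Y1 i <;> interval_cases hh0 : Y0 i <;> norm_num
  have hSb : ∑ i, (Y0 i : ℝ) = (N11:ℝ) + N01 := by
    rw [hN11, hN01, Finset.card_filter, Finset.card_filter]
    push_cast
    rw [← Finset.sum_add_distrib]
    refine Finset.sum_congr rfl fun i _ => ?_
    have h1 := hY1 i; have h0 := hY0 i
    interval_cases hh1 : Y1 i <;> interval_cases hh0 : Y0 i <;> norm_num
  have hSab : ∑ i, (Y1 i : ℝ) * (Y0 i : ℝ) = (N11:ℝ) := by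
    rw [hN11, Finset.card_filter]
    push_cast
    refine Finset.sum_congr rfl fun i _ => ?_
    have h1 := hY1 i; have h0 := hY0 i
    interval_cases hh1 : Y1 i <;> interval_cases hh0 : Y0 i <;> norm_num
  have hNx : (N:ℝ) = (N11:ℝ) + N10 + N01 + N00 := by
    rw [hN11, hN10, hN01, hN00]
    have h1 : ((N:ℝ)) = ∑ _i : Fin N, (1:ℝ) := by simp
    rw [h1]
    push_cast [Finset.card_filter]
    rw [← Finset.sum_add_distrib, ← Finset.sum_add_distrib, ← Finset.sum_add_distrib]
    refine Finset.sum_congr rfl fun i _ => ?_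
    have h1 := hY1 i; have h0 := hY0 i
    interval_cases hh1 : Y1 i <;> interval_cases hh0 : Y0 i <;> norm_num
  have hx00 : (N00:ℝ) = ((N₁:ℝ) + N₀) - N11 - N10 - N01 := by
    rw [← hNr]; linarith [hNx]
  have hkey : (N10:ℝ) * N01 ≤ (N11:ℝ) * N00 := by
    rw [hp0, hp1] at hN01bound
    have h : (N01:ℝ) * N ≤ ((N11:ℝ) + N01) * ((N:ℝ) - ((N11:ℝ) + N10)) := by
      have e : (N:ℝ) * (((N11:ℝ) + N01) / N) * (1 - ((N11:ℝ) + N10) / N)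
          = (((N11:ℝ) + N01) * ((N:ℝ) - ((N11:ℝ) + N10))) / N := by
        field_simp
      rw [e, le_div_iff₀ hNp] at hN01bound
      exact hN01bound
    rw [hNx] at h
    nlinarith [h]
  -- the statistic as a shifted sum
  set c : Fin N → ℝ := fun i => (Y1 i : ℝ)/(N₁:ℝ) + (Y0 i : ℝ)/(N₀:ℝ) with hc
  set K : ℝ := (∑ i, (Y0 i : ℝ))/(N₀:ℝ) with hK
  have hfun : (fun T => (n11 T : ℝ) / (N₁:ℝ) - (n01 T : ℝ) / (N₀:ℝ))
      = fun T => (∑ i ∈ T, c i) - K := by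
    funext T
    have h1 : (n11 T : ℝ) = ∑ i ∈ T, (Y1 i : ℝ) := by rw [hn11 T]; exact hbin Y1 hY1 T
    have h2 : (n01 T : ℝ) = (∑ i, (Y0 i : ℝ)) - ∑ i ∈ T, (Y0 i : ℝ) := by
      rw [hn01 T, hbin Y0 hY0 Tᶜ]
      have := Finset.sum_add_sum_compl T (fun i => (Y0 i : ℝ))
      linarith
    have h3 : ∑ i ∈ T, c i = (∑ i ∈ T, (Y1 i:ℝ))/(N₁:ℝ) + (∑ i ∈ T, (Y0 i:ℝ))/(N₀:ℝ) := by
      rw [hc]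
      rw [Finset.sum_add_distrib, Finset.sum_div, Finset.sum_div]
    rw [h1, h2, h3, hK]
    ring
  rw [hfun, varE_shift N N₁ hN₁N _ K]
  have hV := var_sum N N₁ hN hN₁N c
  have hS1 : ∑ i, c i = ((N11:ℝ) + N10)/(N₁:ℝ) + ((N11:ℝ) + N01)/(N₀:ℝ) := by
    rw [hc]
    rw [Finset.sum_add_distrib, ← hSa, ← hSb, Finset.sum_div, Finset.sum_div]
  have hS2 : ∑ i, (c i)^2 = ((N11:ℝ) + N10)/(N₁:ℝ)^2 + 2*(N11:ℝ)/((N₁:ℝ)*(N₀:ℝ))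
      + ((N11:ℝ) + N01)/(N₀:ℝ)^2 := by
    have hterm : ∀ i : Fin N, (c i)^2 = (Y1 i:ℝ)*(1/(N₁:ℝ)^2)
        + ((Y1 i:ℝ)*(Y0 i:ℝ))*(2/((N₁:ℝ)*(N₀:ℝ))) + (Y0 i:ℝ)*(1/(N₀:ℝ)^2) := by
      intro i
      have h1 : ((Y1 i:ℝ))^2 = (Y1 i:ℝ) := by
        have := hY1 i; interval_cases h : Y1 i <;> norm_num
      have h2 : ((Y0 i:ℝ))^2 = (Y0 i:ℝ) := by
        have := hY0 i; interval_cases h : Y0 i <;> norm_num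
      simp only [hc]
      linear_combination (1/(N₁:ℝ)^2) * h1 + (1/(N₀:ℝ)^2) * h2
    rw [Finset.sum_congr rfl (fun i _ => hterm i), Finset.sum_add_distrib, Finset.sum_add_distrib,
      ← Finset.sum_mul, ← Finset.sum_mul, ← Finset.sum_mul, hSa, hSb, hSab]
    ring
  rw [hS1, hS2] at hV
  have hEpos : (0:ℝ) < (N:ℝ)^2 * ((N:ℝ) - 1) := by positivity
  constructor
  · rw [← mul_le_mul_iff_of_pos_right hEpos, hV, hp1, hp0]
    rw [lower_id (N11:ℝ) (N10:ℝ) (N01:ℝ) (N00:ℝ) (N₁:ℝ) (N₀:ℝ) (N:ℝ) (ne_of_gt hn1p)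
      (ne_of_gt hn0p) hNr hNx (ne_of_gt hN1p) (ne_of_gt hNp)]
    linarith [hkey]
  · rw [← mul_le_mul_iff_of_pos_right hEpos, hV, hp1, hp0, hτ]
    rw [upper_id (N11:ℝ) (N10:ℝ) (N01:ℝ) (N00:ℝ) (N₁:ℝ) (N₀:ℝ) (N:ℝ) (ne_of_gt hn1p)
      (ne_of_gt hn0p) hNr hNx (ne_of_gt hN1p) (ne_of_gt hNp)]
    have hsl : (0:ℝ) ≤ 2 * (N01:ℝ) * (N:ℝ) := by positivity
    linarith
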